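/- arXiv:1909.06633 — 2 statements merged into one kernel-verified Lean document; each statement's English description precedes it below -/
import Mathlib

section
/- Assume 0 < ν < 1/2, βʲ ≥ βⁱ > 0 and e^{−βʲT} > (1−2ν)/(1−ν). Then both agents remaining silent, (a,b) = (0,0), is a Nash equilibrium of the reduced two-lock game: Fⁱ(a, 0) ≤ 0 = Fⁱ(0,0) for every admissible control a of agent i, and Fʲ(b, 0) ≤ 0 = Fʲ(0,0) for every admissible control b of agent j. (Paper's Theorem 4, first case.) -/
open MeasureTheory Real Set

/-- Cumulative rate `A(t) = ∫₀ᵗ a(s) ds` of a control `a`. -/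
noncomputable def cum (a : ℝ → ℝ) (t : ℝ) : ℝ := ∫ s in (0:ℝ)..t, a s

/-- Reduced two-lock payoff of an agent with own rate bound `βown`:
`F(a,b) = ∫₀ᵀ [(1−ν)(1−e^{−βown(T−τ)}) e^{−B(τ)} − ν A(τ)] e^{−A(τ)} a(τ) dτ
          − ν A(T) e^{−A(T)}`. -/
noncomputable def twoLockPayoff (T ν βown : ℝ) (a b : ℝ → ℝ) : ℝ :=
  (∫ τ in (0:ℝ)..T,
      ((1 - ν) * (1 - Real.exp (-(βown * (T - τ)))) * Real.exp (-(cum b τ))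
          - ν * cum a τ) * Real.exp (-(cum a τ)) * a τ)
    - ν * cum a T * Real.exp (-(cum a T))

noncomputable def cumC (a : ℝ → ℝ) (T : ℝ) : ℝ → ℝ :=
  fun t => ∫ s in (0:ℝ)..(max 0 (min t T)), a s

variable {T β : ℝ} {a : ℝ → ℝ}

lemma clamp_mem (hT : 0 ≤ T) (t : ℝ) : max 0 (min t T) ∈ Icc 0 T :=
  ⟨le_max_left _ _, max_le hT (min_le_right _ _)⟩

lemma cumC_eq (hT : 0 ≤ T) {t : ℝ} (ht : t ∈ Icc 0 T) : cumC a T t = cum a t := by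
  unfold cumC cum
  rw [min_eq_left ht.2, max_eq_right ht.1]

lemma integrableOn_of_bdd (ha : Measurable a) (hb : ∀ t ∈ Icc 0 T, a t ∈ Icc 0 β) :
    IntegrableOn a (Icc 0 T) := by
  refine Integrable.mono' (integrable_const β) ha.aestronglyMeasurable.restrict ?_
  filter_upwards [ae_restrict_mem measurableSet_Icc] with t ht
  have h := hb t ht
  rw [Real.norm_eq_abs, abs_of_nonneg h.1]
  exact h.2

lemma cumC_cont (hT : 0 ≤ T) (haI : IntegrableOn a (Icc 0 T)) : Continuous (cumC a T) := by
  have h1 : ContinuousOn (fun x => ∫ s in (0:ℝ)..x, a s) (Icc 0 T) := by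
    have := intervalIntegral.continuousOn_primitive_interval (f := a) (a := (0:ℝ)) (b := T)
      (μ := volume) (by rwa [uIcc_of_le hT])
    rwa [uIcc_of_le hT] at this
  exact h1.comp_continuous
    (continuous_const.max (continuous_id.min continuous_const)) (clamp_mem hT)

lemma cumC_mono (hT : 0 ≤ T) (haI : IntegrableOn a (Icc 0 T))
    (hnn : ∀ t ∈ Icc 0 T, 0 ≤ a t) : Monotone (cumC a T) := by
  intro s t hst
  set cs := max 0 (min s T)
  set ct := max 0 (min t T)
  have hcs := clamp_mem hT s
  have hct := clamp_mem hT t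
  have hc : cs ≤ ct := max_le_max le_rfl (min_le_min hst le_rfl)
  have h1 : IntervalIntegrable a volume 0 cs :=
    (haI.mono_set (by rw [uIcc_of_le hcs.1]; exact Icc_subset_Icc le_rfl hcs.2)).intervalIntegrable
  have h2 : IntervalIntegrable a volume cs ct :=
    (haI.mono_set (by rw [uIcc_of_le hc]; exact Icc_subset_Icc hcs.1 hct.2)).intervalIntegrable
  have hadd := intervalIntegral.integral_add_adjacent_intervals h1 h2
  have h3 : 0 ≤ ∫ u in cs..ct, a u :=
    intervalIntegral.integral_nonneg hc (fun u hu => hnn u ⟨hcs.1.trans hu.1, hu.2.trans hct.2⟩)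
  show (∫ s in (0:ℝ)..cs, a s) ≤ ∫ s in (0:ℝ)..ct, a s
  linarith

lemma cumC_nonneg (hT : 0 ≤ T) (hnn : ∀ t ∈ Icc 0 T, 0 ≤ a t) (t : ℝ) :
    0 ≤ cumC a T t := by
  have hc := clamp_mem hT t
  exact intervalIntegral.integral_nonneg hc.1 (fun u hu => hnn u ⟨hu.1, hu.2.trans hc.2⟩)

lemma cumC_zero (hT : 0 ≤ T) : cumC a T 0 = 0 := by
  unfold cumC
  rw [min_eq_left hT, max_self, intervalIntegral.integral_same]

lemma mu_Ioc (hT : 0 ≤ T) (ha : Measurable a) (haI : IntegrableOn a (Icc 0 T))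
    (hnn : ∀ t ∈ Icc 0 T, 0 ≤ a t) {s : ℝ} (hs : s ∈ Icc 0 T) :
    ((volume.restrict (Ioc 0 T)).withDensity fun τ => ENNReal.ofReal (a τ)) (Ioc 0 s)
      = ENNReal.ofReal (cumC a T s) := by
  rw [withDensity_apply _ measurableSet_Ioc, Measure.restrict_restrict measurableSet_Ioc,
    Ioc_inter_Ioc, max_self, min_eq_left hs.2]
  have haI' : IntegrableOn a (Ioc 0 s) :=
    haI.mono_set ((Ioc_subset_Icc_self).trans (Icc_subset_Icc le_rfl hs.2))
  rw [← ofReal_integral_eq_lintegral_ofReal haI' ?_]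
  · congr 1
    rw [cumC_eq hT hs]
    unfold cum
    rw [intervalIntegral.integral_of_le hs.1]
  · filter_upwards [ae_restrict_mem measurableSet_Ioc] with t ht
    exact hnn t ⟨ht.1.le, ht.2.trans hs.2⟩

lemma mu_finite (hT : 0 ≤ T) (ha : Measurable a) (hb : ∀ t ∈ Icc 0 T, a t ∈ Icc 0 β) :
    IsFiniteMeasure ((volume.restrict (Ioc 0 T)).withDensity fun τ => ENNReal.ofReal (a τ)) := by
  constructor
  rw [withDensity_apply _ MeasurableSet.univ, Measure.restrict_restrict MeasurableSet.univ,
    univ_inter]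
  calc ∫⁻ τ in Ioc 0 T, ENNReal.ofReal (a τ) ≤ ∫⁻ _ in Ioc 0 T, ENNReal.ofReal β := by
        apply lintegral_mono_ae
        filter_upwards [ae_restrict_mem measurableSet_Ioc] with t ht
        exact ENNReal.ofReal_le_ofReal (hb t (Ioc_subset_Icc_self ht)).2
    _ = ENNReal.ofReal β * volume (Ioc 0 T) := by
        rw [lintegral_const, Measure.restrict_apply MeasurableSet.univ, univ_inter]
    _ < ⊤ := by
        rw [Real.volume_Ioc]
        exact ENNReal.mul_lt_top ENNReal.ofReal_lt_top ENNReal.ofReal_lt_top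

lemma map_cumC (hT : 0 ≤ T) (ha : Measurable a) (hb : ∀ t ∈ Icc 0 T, a t ∈ Icc 0 β) :
    Measure.map (cumC a T)
        ((volume.restrict (Ioc 0 T)).withDensity fun τ => ENNReal.ofReal (a τ))
      = volume.restrict (Ioc 0 (cumC a T T)) := by
  have haI := integrableOn_of_bdd ha hb
  have hnn : ∀ t ∈ Icc 0 T, 0 ≤ a t := fun t ht => (hb t ht).1
  have hcont := cumC_cont hT haI
  have hmono := cumC_mono hT haI hnn
  have hTmem : T ∈ Icc (0:ℝ) T := ⟨hT, le_rfl⟩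
  set A := cumC a T with hAdef
  set μ := (volume.restrict (Ioc 0 T)).withDensity fun τ => ENNReal.ofReal (a τ) with hμdef
  haveI : IsFiniteMeasure μ := mu_finite hT ha hb
  haveI : IsFiniteMeasure (Measure.map A μ) := by
    constructor
    rw [Measure.map_apply hcont.measurable MeasurableSet.univ, preimage_univ]
    exact measure_lt_top μ univ
  apply Measure.ext_of_Iic
  intro u
  rw [Measure.map_apply hcont.measurable measurableSet_Iic,
    Measure.restrict_apply measurableSet_Iic]
  rcases lt_or_ge u 0 with hu | hu
  · have h1 : A ⁻¹' Iic u = ∅ := by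
      apply eq_empty_of_forall_notMem
      intro t ht
      exact absurd (le_trans (cumC_nonneg hT hnn t) ht) (not_le.mpr hu)
    have h2 : Iic u ∩ Ioc 0 (A T) = ∅ := by
      apply eq_empty_of_forall_notMem
      rintro x ⟨hx1, hx2, -⟩
      exact absurd (hx2.trans_le hx1) (not_lt.mpr hu.le)
    rw [h1, h2, measure_empty, measure_empty]
  · -- u ≥ 0
    set S := Icc 0 T ∩ A ⁻¹' Iic u with hSdef
    have hScl : IsClosed S := isClosed_Icc.inter (isClosed_Iic.preimage hcont)
    have hScpt : IsCompact S := isCompact_Icc.of_isClosed_subset hScl inter_subset_left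
    have hA0 : A 0 = 0 := cumC_zero hT
    have hSne : S.Nonempty := ⟨0, ⟨le_rfl, hT⟩, by simp [hA0, hu]⟩
    set s := sSup S with hsdef
    have hsS : s ∈ S := hScpt.sSup_mem hSne
    have hbdd : BddAbove S := ⟨T, fun x hx => hx.1.2⟩
    have hAs_eq : A s = min (A T) u := by
      rcases le_or_gt (A T) u with hTu | hTu
      · have hTS : T ∈ S := ⟨hTmem, hTu⟩
        have : s = T := le_antisymm hsS.1.2 (le_csSup hbdd hTS)
        rw [this, min_eq_left hTu]
      · rw [min_eq_right hTu.le]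
        refine le_antisymm hsS.2 ?_
        by_contra hlt
        push_neg at hlt
        have hsT : s < T := by
          rcases eq_or_lt_of_le hsS.1.2 with h | h
          · exact absurd (h ▸ hlt) (not_lt.mpr hTu.le)
          · exact h
        have hev1 : ∀ᶠ t in nhds s, A t < u := hcont.continuousAt.eventually_lt_const hlt
        have hev2 : ∀ᶠ t in nhds s, t < T := isOpen_Iio.eventually_mem hsT
        obtain ⟨t, ⟨hAt, htT⟩, hts⟩ :=
          ((((hev1.and hev2).filter_mono (nhdsWithin_le_nhds (s := Ioi s))).and
            eventually_mem_nhdsWithin)).exists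
        have htS : t ∈ S := ⟨⟨hsS.1.1.trans hts.le, htT.le⟩, hAt.le⟩
        exact absurd (le_csSup hbdd htS) (not_le.mpr hts)
    have hpre : A ⁻¹' Iic u ∩ Ioc 0 T = Ioc 0 s := by
      ext τ
      constructor
      · rintro ⟨h1, h2, h3⟩
        exact ⟨h2, le_csSup hbdd ⟨⟨h2.le, h3⟩, h1⟩⟩
      · rintro ⟨h1, h2⟩
        refine ⟨le_trans (hmono h2) (hAs_eq ▸ min_le_right _ _), h1, h2.trans hsS.1.2⟩
    have hmu : μ (A ⁻¹' Iic u) = μ (Ioc 0 s) := by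
      rw [hμdef, withDensity_apply _ (hcont.measurable measurableSet_Iic),
        withDensity_apply _ measurableSet_Ioc,
        Measure.restrict_restrict (hcont.measurable measurableSet_Iic),
        Measure.restrict_restrict measurableSet_Ioc, hpre,
        Ioc_inter_Ioc, max_self, min_eq_left hsS.1.2]
    rw [hmu, mu_Ioc hT ha haI hnn hsS.1, ← hAdef, hAs_eq]
    rw [inter_comm, Ioc_inter_Iic, Real.volume_Ioc, sub_zero, min_comm]

lemma integral_comp_cumC (hT : 0 ≤ T) (ha : Measurable a) (hb : ∀ t ∈ Icc 0 T, a t ∈ Icc 0 β)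
    (f : ℝ → ℝ) (hf : Continuous f) :
    ∫ τ in (0:ℝ)..T, f (cumC a T τ) * a τ = ∫ u in (0:ℝ)..(cumC a T T), f u := by
  have haI := integrableOn_of_bdd ha hb
  have hnn : ∀ t ∈ Icc 0 T, 0 ≤ a t := fun t ht => (hb t ht).1
  have hcont := cumC_cont hT haI
  set A := cumC a T with hAdef
  set μ := (volume.restrict (Ioc 0 T)).withDensity fun τ => ENNReal.ofReal (a τ) with hμdef
  have hX : 0 ≤ A T := cumC_nonneg hT hnn T
  rw [intervalIntegral.integral_of_le hT, intervalIntegral.integral_of_le hX]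
  have step1 : ∫ u in Ioc 0 (A T), f u = ∫ u, f u ∂(Measure.map A μ) := by
    rw [map_cumC hT ha hb]
  rw [step1, integral_map hcont.measurable.aemeasurable hf.aestronglyMeasurable]
  have hdens : (fun τ => ENNReal.ofReal (a τ)) = fun τ => ((a τ).toNNReal : ENNReal) := rfl
  rw [hμdef, hdens, integral_withDensity_eq_integral_smul ha.real_toNNReal]
  apply integral_congr_ae
  filter_upwards [ae_restrict_mem measurableSet_Ioc] with τ hτ
  have h0 : 0 ≤ a τ := hnn τ (Ioc_subset_Icc_self hτ)
  rw [NNReal.smul_def, smul_eq_mul, Real.coe_toNNReal _ h0, mul_comm]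

lemma intervalIntegrable_contmul (hT : 0 ≤ T) (ha : Measurable a)
    (hb : ∀ t ∈ Icc 0 T, a t ∈ Icc 0 β) (g : ℝ → ℝ) (hg : Continuous g) :
    IntervalIntegrable (fun τ => g τ * a τ) volume 0 T := by
  rw [intervalIntegrable_iff_integrableOn_Ioc_of_le hT]
  obtain ⟨C, hC⟩ := (isCompact_Icc (a := (0:ℝ)) (b := T)).exists_bound_of_continuousOn
    hg.continuousOn
  have hC0 : 0 ≤ C := le_trans (norm_nonneg _) (hC 0 ⟨le_rfl, hT⟩)
  refine Integrable.mono' (integrable_const (C * β))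
    ((hg.measurable.mul ha).aestronglyMeasurable) ?_
  filter_upwards [ae_restrict_mem measurableSet_Ioc] with τ hτ
  have hτ' : τ ∈ Icc (0:ℝ) T := Ioc_subset_Icc_self hτ
  have h2 := hb τ hτ'
  rw [norm_mul]
  have : ‖a τ‖ ≤ β := by rw [Real.norm_eq_abs, abs_of_nonneg h2.1]; exact h2.2
  exact mul_le_mul (hC τ hτ') this (norm_nonneg _) hC0

lemma payoff_nonpos (T ν β βj : ℝ) (hT : 0 < T) (hν0 : 0 < ν) (hν1 : ν < 1)
    (hβ : 0 < β) (hββj : β ≤ βj)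
    (hc : (1 - ν) * (1 - Real.exp (-(βj * T))) < ν)
    (a : ℝ → ℝ) (ha : Measurable a) (hb : ∀ t ∈ Icc 0 T, a t ∈ Icc 0 β) :
    twoLockPayoff T ν β a (fun _ => 0) ≤ 0 := by
  have hT' := hT.le
  set c := (1 - ν) * (1 - Real.exp (-(βj * T))) with hcdef
  have haI := integrableOn_of_bdd ha hb
  have hnn : ∀ t ∈ Icc 0 T, 0 ≤ a t := fun t ht => (hb t ht).1
  have hcont := cumC_cont hT' haI
  set A := cumC a T with hAdef
  set X := A T with hXdef
  have hX : 0 ≤ X := cumC_nonneg hT' hnn T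
  have hAX : cum a T = X := (cumC_eq hT' ⟨hT', le_rfl⟩).symm
  unfold twoLockPayoff
  rw [hAX]
  have hEq : ∀ τ ∈ uIcc (0:ℝ) T,
      (((1 - ν) * (1 - Real.exp (-(β * (T - τ)))) * Real.exp (-(cum (fun _ => (0:ℝ)) τ))
          - ν * cum a τ) * Real.exp (-(cum a τ)) * a τ)
        = ((1 - ν) * (1 - Real.exp (-(β * (T - τ)))) - ν * A τ) * Real.exp (-(A τ)) * a τ := by
    intro τ hτ
    rw [uIcc_of_le hT'] at hτ
    have hb0 : cum (fun _ => (0:ℝ)) τ = 0 := by simp [cum]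
    rw [hb0, ← cumC_eq hT' hτ, neg_zero, Real.exp_zero, mul_one]
  rw [intervalIntegral.integral_congr hEq]
  -- pointwise bound constant
  have hcc : ∀ τ ∈ Icc (0:ℝ) T, (1 - ν) * (1 - Real.exp (-(β * (T - τ)))) ≤ c := by
    intro τ hτ
    have h1 : β * (T - τ) ≤ βj * T :=
      mul_le_mul hββj (by linarith [hτ.1]) (by linarith [hτ.2]) (hβ.le.trans hββj)
    have h2 : Real.exp (-(βj * T)) ≤ Real.exp (-(β * (T - τ))) :=
      Real.exp_le_exp.mpr (by linarith)
    nlinarith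
  -- integrability of both integrands
  have hint1 : IntervalIntegrable
      (fun τ => ((1 - ν) * (1 - Real.exp (-(β * (T - τ)))) - ν * A τ) * Real.exp (-(A τ)) * a τ)
      volume 0 T := by
    have hg : Continuous fun τ =>
        ((1 - ν) * (1 - Real.exp (-(β * (T - τ)))) - ν * A τ) * Real.exp (-(A τ)) := by
      fun_prop
    simpa [mul_assoc] using intervalIntegrable_contmul hT' ha hb _ hg
  have hint2 : IntervalIntegrable
      (fun τ => ((c - ν * A τ) * Real.exp (-(A τ))) * a τ) volume 0 T := by
    have hg : Continuous fun τ => (c - ν * A τ) * Real.exp (-(A τ)) := by fun_prop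
    exact intervalIntegrable_contmul hT' ha hb _ hg
  have hmono_int :
      (∫ τ in (0:ℝ)..T,
        ((1 - ν) * (1 - Real.exp (-(β * (T - τ)))) - ν * A τ) * Real.exp (-(A τ)) * a τ)
      ≤ ∫ τ in (0:ℝ)..T, ((c - ν * A τ) * Real.exp (-(A τ))) * a τ := by
    apply intervalIntegral.integral_mono_on hT' hint1 hint2
    intro τ hτ
    rw [mul_assoc, mul_assoc]
    apply mul_le_mul_of_nonneg_right _ (mul_nonneg (Real.exp_pos _).le (hnn τ hτ))
    have := hcc τ hτ
    linarith
  -- substitution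
  have hsub : (∫ τ in (0:ℝ)..T, ((c - ν * A τ) * Real.exp (-(A τ))) * a τ)
      = ∫ u in (0:ℝ)..X, (c - ν * u) * Real.exp (-u) := by
    exact integral_comp_cumC hT' ha hb (fun u => (c - ν * u) * Real.exp (-u)) (by fun_prop)
  -- FTC
  have hftc : (∫ u in (0:ℝ)..X, (c - ν * u) * Real.exp (-u))
      = ((ν * X + (ν - c)) * Real.exp (-X)) - (ν - c) := by
    have hder : ∀ u ∈ uIcc (0:ℝ) X,
        HasDerivAt (fun u => (ν * u + (ν - c)) * Real.exp (-u))
          ((c - ν * u) * Real.exp (-u)) u := by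
      intro u _
      have h1 : HasDerivAt (fun u : ℝ => ν * u + (ν - c)) ν u := by
        simpa using ((hasDerivAt_id u).const_mul ν).add_const (ν - c)
      have h2 : HasDerivAt (fun u : ℝ => Real.exp (-u)) (-Real.exp (-u)) u := by
        simpa [Function.comp_def] using (Real.hasDerivAt_exp (-u)).comp u ((hasDerivAt_id u).neg)
      have := h1.mul h2
      exact this.congr_deriv (by ring)
    rw [intervalIntegral.integral_eq_sub_of_hasDerivAt hder
      (Continuous.intervalIntegrable (by fun_prop) 0 X)]
    simp [Real.exp_zero]
  have hexp1 : Real.exp (-X) ≤ 1 := Real.exp_le_one_iff.mpr (by linarith)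
  have hfin : ((ν * X + (ν - c)) * Real.exp (-X)) - (ν - c) - ν * X * Real.exp (-X) ≤ 0 := by
    nlinarith [Real.exp_pos (-X)]
  calc (∫ τ in (0:ℝ)..T,
        ((1 - ν) * (1 - Real.exp (-(β * (T - τ)))) - ν * A τ) * Real.exp (-(A τ)) * a τ)
        - ν * X * Real.exp (-X)
      ≤ (∫ τ in (0:ℝ)..T, ((c - ν * A τ) * Real.exp (-(A τ))) * a τ) - ν * X * Real.exp (-X) := by
        linarith
    _ = ((ν * X + (ν - c)) * Real.exp (-X)) - (ν - c) - ν * X * Real.exp (-X) := by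
        rw [hsub, hftc]
    _ ≤ 0 := hfin

/-- Time-threshold control `Γ_β(ψ)(t) = β · 𝟙_{[0,ψ]}(t)`. -/
noncomputable def threshold (β ψ : ℝ) : ℝ → ℝ :=
  fun t => if t ∈ Set.Icc (0:ℝ) ψ then β else 0

/-- Paper's Theorem 4, first case: if `0 < ν < 1/2`, `βʲ ≥ βⁱ` and
`e^{−βʲT} > (1−2ν)/(1−ν)`, then both agents remaining silent is a Nash
equilibrium of the reduced two-lock game. -/
theorem two_lock_NE_both_silent
    (T ν βi βj : ℝ) (hT : 0 < T) (hν0 : 0 < ν) (hν1 : ν < 1/2)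
    (hβi : 0 < βi) (hβij : βi ≤ βj)
    (hcase : Real.exp (-(βj * T)) > (1 - 2*ν) / (1 - ν)) :
    (∀ a : ℝ → ℝ, Measurable a → (∀ t ∈ Icc (0:ℝ) T, a t ∈ Icc (0:ℝ) βi) →
        twoLockPayoff T ν βi a (fun _ => 0) ≤ 0) ∧
    twoLockPayoff T ν βi (fun _ => 0) (fun _ => 0) = 0 ∧
    (∀ b : ℝ → ℝ, Measurable b → (∀ t ∈ Icc (0:ℝ) T, b t ∈ Icc (0:ℝ) βj) →
        twoLockPayoff T ν βj b (fun _ => 0) ≤ 0) ∧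
    twoLockPayoff T ν βj (fun _ => 0) (fun _ => 0) = 0 := by
  have hν1' : ν < 1 := by linarith
  have hc : (1 - ν) * (1 - Real.exp (-(βj * T))) < ν := by
    have h1 : (0:ℝ) < 1 - ν := by linarith
    have h2 := (div_lt_iff₀ h1).mp hcase
    nlinarith
  have hz : ∀ β' : ℝ, twoLockPayoff T ν β' (fun _ => 0) (fun _ => 0) = 0 := by
    intro β'
    simp [twoLockPayoff, cum]
  exact ⟨fun a ha hab => payoff_nonpos T ν βi βj hT hν0 hν1' hβi hβij hc a ha hab, hz _,
    fun b hb hbb =>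
      payoff_nonpos T ν βj βj hT hν0 hν1' (hβi.trans_le hβij) le_rfl hc b hb hbb, hz _⟩
end

section
/- Assume 0 < ν < 1/2, βʲ ≥ βⁱ > 0 and e^{−βⁱT} > (1−2ν)/(1−ν) > e^{−βʲT}. Set ψ₀ = T + (1/βʲ) ln((1−2ν)/(1−ν)). Then ψ₀ ∈ (0,T), and the pair (0, Γ_{βʲ}(ψ₀)) — agent i silent, agent j playing the threshold control with threshold ψ₀ — is a Nash equilibrium of the reduced two-lock game: Fⁱ(a, Γ_{βʲ}(ψ₀)) ≤ Fⁱ(0, Γ_{βʲ}(ψ₀)) for every admissible control a of agent i, and Fʲ(b, 0) ≤ Fʲ(Γ_{βʲ}(ψ₀), 0) for every admissible control b of agent j. (Paper's Theorem 4, second case.) -/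
open MeasureTheory Real Set

lemma ctrl_int {a : ℝ → ℝ} {M : ℝ} (ha : Measurable a) (h0 : ∀ t, 0 ≤ a t)
    (hM : ∀ t, a t ≤ M) (u v : ℝ) : IntervalIntegrable a volume u v := by
  refine IntervalIntegrable.mono_fun' (g := fun _ => M) intervalIntegrable_const
    ha.aestronglyMeasurable.restrict ?_
  filter_upwards with t
  simpa [Real.norm_eq_abs, abs_of_nonneg (h0 t)] using hM t

lemma cum_add {a : ℝ → ℝ} (hint : ∀ u v, IntervalIntegrable a volume u v) (u v : ℝ) :
    cum a v = cum a u + ∫ s in u..v, a s := by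
  rw [cum, cum, intervalIntegral.integral_add_adjacent_intervals (hint 0 u) (hint u v)]

lemma cum_sub_le {a : ℝ → ℝ} {M : ℝ} (ha : Measurable a) (h0 : ∀ t, 0 ≤ a t)
    (hM : ∀ t, a t ≤ M) {u v : ℝ} (huv : u ≤ v) :
    cum a v - cum a u ≤ M * (v - u) := by
  rw [cum_add (ctrl_int ha h0 hM) u v]
  have : (∫ s in u..v, a s) ≤ ∫ s in u..v, M := by
    exact intervalIntegral.integral_mono_on huv (ctrl_int ha h0 hM u v)
      intervalIntegrable_const (fun x _ => hM x)
  simpa [intervalIntegral.integral_const, smul_eq_mul, mul_comm] using this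

lemma cum_mono {a : ℝ → ℝ} {M : ℝ} (ha : Measurable a) (h0 : ∀ t, 0 ≤ a t)
    (hM : ∀ t, a t ≤ M) {u v : ℝ} (huv : u ≤ v) : cum a u ≤ cum a v := by
  rw [cum_add (ctrl_int ha h0 hM) u v]
  have : (0:ℝ) ≤ ∫ s in u..v, a s :=
    intervalIntegral.integral_nonneg huv (fun x _ => h0 x)
  linarith

lemma cum_zero {a : ℝ → ℝ} : cum a 0 = 0 := by simp [cum]

lemma cum_nonneg {a : ℝ → ℝ} {M : ℝ} (ha : Measurable a) (h0 : ∀ t, 0 ≤ a t)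
    (hM : ∀ t, a t ≤ M) {t : ℝ} (ht : 0 ≤ t) : 0 ≤ cum a t := by
  have := cum_mono ha h0 hM ht (u := 0)
  simpa [cum_zero] using this

lemma cum_cont {a : ℝ → ℝ} {M : ℝ} (ha : Measurable a) (h0 : ∀ t, 0 ≤ a t)
    (hM : ∀ t, a t ≤ M) : Continuous (cum a) :=
  intervalIntegral.continuous_primitive (ctrl_int ha h0 hM) 0

lemma ftc_chain {a : ℝ → ℝ} {M : ℝ} (ha : Measurable a)
    (h0 : ∀ t, 0 ≤ a t) (hM : ∀ t, a t ≤ M)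
    {φ φ' : ℝ → ℝ} (hφ : ∀ x, HasDerivAt φ (φ' x) x)
    (hφ'c : Continuous φ') {L : ℝ} (hL0 : 0 ≤ L)
    (hL : ∀ u v, 0 ≤ u → 0 ≤ v → |φ' u - φ' v| ≤ L * |u - v|)
    {T : ℝ} (hT : 0 ≤ T) :
    ∫ τ in (0:ℝ)..T, φ' (cum a τ) * a τ = φ (cum a T) - φ 0 := by
  have hM0 : 0 ≤ M := le_trans (h0 0) (hM 0)
  set A := cum a with hA
  have haint := ctrl_int ha h0 hM
  have hAc : Continuous A := cum_cont ha h0 hM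
  have hfint : ∀ u v : ℝ, IntervalIntegrable (fun τ => φ' (A τ) * a τ) volume u v := by
    intro u v
    exact (haint u v).continuousOn_mul ((hφ'c.comp hAc).continuousOn)
  have hφ'int : ∀ u v : ℝ, IntervalIntegrable φ' volume u v := fun u v =>
    hφ'c.intervalIntegrable u v
  -- per-interval estimate
  have key : ∀ u v : ℝ, 0 ≤ u → u ≤ v →
      |(∫ τ in u..v, φ' (A τ) * a τ) - (φ (A v) - φ (A u))|
        ≤ 2 * L * M^2 * (v - u)^2 := by
    intro u v hu huv
    set D := A v - A u with hD
    have hD0 : 0 ≤ D := by have := cum_mono ha h0 hM huv; simp [hD]; linarith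
    have hDle : D ≤ M * (v - u) := cum_sub_le ha h0 hM huv
    have hAu0 : 0 ≤ A u := cum_nonneg ha h0 hM hu
    -- first error
    have e1 : |(∫ τ in u..v, φ' (A τ) * a τ) - φ' (A u) * D| ≤ L * D * M * (v - u) := by
      have hAv : (∫ τ in u..v, a τ) = A v - A u := by
        have := cum_add haint u v; simp only [hA]; linarith
      have : (∫ τ in u..v, φ' (A τ) * a τ) - φ' (A u) * D
          = ∫ τ in u..v, (φ' (A τ) - φ' (A u)) * a τ := by
        have hsub : (∫ τ in u..v, (φ' (A τ) - φ' (A u)) * a τ)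
            = (∫ τ in u..v, φ' (A τ) * a τ) - φ' (A u) * ∫ τ in u..v, a τ := by
          rw [← intervalIntegral.integral_const_mul,
            ← intervalIntegral.integral_sub (hfint u v) ((haint u v).const_mul _)]
          congr 1; funext τ; ring
        rw [hsub, hAv, hD]
      rw [this]
      have := intervalIntegral.norm_integral_le_of_norm_le_const
        (C := L * D * M) (f := fun τ => (φ' (A τ) - φ' (A u)) * a τ) (a := u) (b := v) ?_
      · rw [Real.norm_eq_abs] at this
        calc |∫ τ in u..v, (φ' (A τ) - φ' (A u)) * a τ| ≤ L * D * M * |v - u| := this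
        _ = L * D * M * (v - u) := by rw [abs_of_nonneg (by linarith)]
      · intro x hx
        rw [Set.uIoc_of_le huv] at hx
        have hxu : u ≤ x := le_of_lt hx.1
        have hxv : x ≤ v := hx.2
        have hAx0 : 0 ≤ A x := cum_nonneg ha h0 hM (le_trans hu hxu)
        have h1 : |φ' (A x) - φ' (A u)| ≤ L * D := by
          have := hL (A x) (A u) hAx0 hAu0
          have hmono1 := cum_mono ha h0 hM hxu
          have hmono2 := cum_mono ha h0 hM hxv
          have : |φ' (A x) - φ' (A u)| ≤ L * |A x - A u| := this
          have habs : |A x - A u| ≤ D := by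
            rw [abs_of_nonneg (by linarith)]; simp [hD]; linarith
          calc |φ' (A x) - φ' (A u)| ≤ L * |A x - A u| := this
          _ ≤ L * D := by nlinarith
        rw [Real.norm_eq_abs, abs_mul, abs_of_nonneg (h0 x)]
        have hax := hM x
        have hax0 := h0 x
        have habs0 : 0 ≤ |φ' (A x) - φ' (A u)| := abs_nonneg _
        nlinarith
    -- second error
    have e2 : |(φ (A v) - φ (A u)) - φ' (A u) * D| ≤ L * D * D := by
      have hftc : φ (A v) - φ (A u) = ∫ x in (A u)..(A v), φ' x :=
        (intervalIntegral.integral_eq_sub_of_hasDerivAt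
          (fun x _ => hφ x) (hφ'int _ _)).symm
      have hconst : φ' (A u) * D = ∫ x in (A u)..(A v), φ' (A u) := by
        simp [hD, intervalIntegral.integral_const, smul_eq_mul, mul_comm]
      rw [hftc, hconst, ← intervalIntegral.integral_sub (hφ'int _ _) intervalIntegrable_const]
      have := intervalIntegral.norm_integral_le_of_norm_le_const
        (C := L * D) (f := fun x => φ' x - φ' (A u)) (a := A u) (b := A v) ?_
      · rw [Real.norm_eq_abs] at this
        calc |∫ x in (A u)..(A v), (φ' x - φ' (A u))| ≤ L * D * |A v - A u| := this
        _ = L * D * D := by rw [abs_of_nonneg hD0]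
      · intro x hx
        rw [Set.uIoc_of_le (by linarith : A u ≤ A v)] at hx
        have hx0 : 0 ≤ x := le_trans hAu0 (le_of_lt hx.1)
        have := hL x (A u) hx0 hAu0
        rw [Real.norm_eq_abs]
        have habs : |x - A u| ≤ D := by
          rw [abs_of_nonneg (by linarith [hx.1])]
          have := hx.2; simp [hD]; linarith
        calc |φ' x - φ' (A u)| ≤ L * |x - A u| := this
        _ ≤ L * D := by nlinarith
    calc |(∫ τ in u..v, φ' (A τ) * a τ) - (φ (A v) - φ (A u))|
        ≤ |(∫ τ in u..v, φ' (A τ) * a τ) - φ' (A u) * D|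
          + |(φ (A v) - φ (A u)) - φ' (A u) * D| := by
          have : (∫ τ in u..v, φ' (A τ) * a τ) - (φ (A v) - φ (A u))
            = ((∫ τ in u..v, φ' (A τ) * a τ) - φ' (A u) * D)
              - ((φ (A v) - φ (A u)) - φ' (A u) * D) := by ring
          rw [this]; exact abs_sub _ _
    _ ≤ L * D * M * (v - u) + L * D * D := by linarith
    _ ≤ 2 * L * M^2 * (v - u)^2 := by
          have hx : (0:ℝ) ≤ v - u := by linarith
          have t1 : 0 ≤ L * M * (v-u) * (M*(v-u) - D) :=
            mul_nonneg (mul_nonneg (mul_nonneg hL0 hM0) hx) (by linarith)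
          have t2 : 0 ≤ L * (M*(v-u) - D) * (M*(v-u) + D) :=
            mul_nonneg (mul_nonneg hL0 (by linarith)) (by positivity)
          nlinarith [t1, t2]
  -- partition argument
  have main : ∀ n : ℕ, 0 < n →
      |(∫ τ in (0:ℝ)..T, φ' (A τ) * a τ) - (φ (A T) - φ 0)| ≤ 2 * L * M^2 * T^2 / n := by
    intro n hn
    set δ : ℝ := T / n with hδ
    have hδ0 : 0 ≤ δ := div_nonneg hT (Nat.cast_nonneg n)
    set t : ℕ → ℝ := fun k => k * δ with ht
    have htmono : ∀ k : ℕ, t k ≤ t (k+1) := by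
      intro k; simp only [ht]; push_cast; nlinarith
    have ht0 : ∀ k : ℕ, 0 ≤ t k := by
      intro k; simp only [ht]; positivity
    have htn : t n = T := by
      simp only [ht, hδ]; field_simp
    have hsplit : ∑ k ∈ Finset.range n, ∫ τ in (t k)..(t (k+1)), φ' (A τ) * a τ
        = ∫ τ in (0:ℝ)..T, φ' (A τ) * a τ := by
      have := intervalIntegral.sum_integral_adjacent_intervals
        (a := t) (n := n) (f := fun τ => φ' (A τ) * a τ) (fun k _ => hfint _ _)
      rw [this]
      norm_num [ht, htn]
      rw [show (n:ℝ) * δ = T by rw [hδ]; field_simp]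
    have htel : ∑ k ∈ Finset.range n, (φ (A (t (k+1))) - φ (A (t k)))
        = φ (A T) - φ 0 := by
      rw [Finset.sum_range_sub (fun k => φ (A (t k)))]
      simp [ht, htn, cum_zero, hA]
      rw [show (n:ℝ) * δ = T by rw [hδ]; field_simp]
    calc |(∫ τ in (0:ℝ)..T, φ' (A τ) * a τ) - (φ (A T) - φ 0)|
        = |∑ k ∈ Finset.range n, ((∫ τ in (t k)..(t (k+1)), φ' (A τ) * a τ)
            - (φ (A (t (k+1))) - φ (A (t k))))| := by
          rw [Finset.sum_sub_distrib, hsplit, htel]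
    _ ≤ ∑ k ∈ Finset.range n, |(∫ τ in (t k)..(t (k+1)), φ' (A τ) * a τ)
            - (φ (A (t (k+1))) - φ (A (t k)))| := Finset.abs_sum_le_sum_abs _ _
    _ ≤ ∑ k ∈ Finset.range n, 2 * L * M^2 * δ^2 := by
          apply Finset.sum_le_sum
          intro k _
          have := key (t k) (t (k+1)) (ht0 k) (htmono k)
          have hdiff : t (k+1) - t k = δ := by simp [ht]; push_cast; ring
          rwa [hdiff] at this
    _ = n * (2 * L * M^2 * δ^2) := by rw [Finset.sum_const, Finset.card_range]; simp [nsmul_eq_mul]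
    _ = 2 * L * M^2 * T^2 / n := by
          have hn' : ((n:ℝ)) ≠ 0 := Nat.cast_ne_zero.2 hn.ne'
          rw [hδ]; field_simp
  have habs : |(∫ τ in (0:ℝ)..T, φ' (A τ) * a τ) - (φ (A T) - φ 0)| ≤ 0 := by
    have htend : Filter.Tendsto (fun n : ℕ => 2 * L * M^2 * T^2 / n) Filter.atTop (nhds 0) :=
      tendsto_const_div_atTop_nhds_zero_nat _
    refine ge_of_tendsto htend ?_
    filter_upwards [Filter.eventually_gt_atTop 0] with n hn
    exact main n hn
  have := abs_nonneg ((∫ τ in (0:ℝ)..T, φ' (A τ) * a τ) - (φ (A T) - φ 0))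
  have : |(∫ τ in (0:ℝ)..T, φ' (A τ) * a τ) - (φ (A T) - φ 0)| = 0 := le_antisymm habs this
  have := abs_eq_zero.1 this
  linarith [this]

lemma lip_on_Ici {f f' : ℝ → ℝ} {C : ℝ} (hf : ∀ x, HasDerivAt f (f' x) x)
    (hb : ∀ x, 0 ≤ x → |f' x| ≤ C) :
    ∀ u v, 0 ≤ u → 0 ≤ v → |f u - f v| ≤ C * |u - v| := by
  intro u v hu hv
  have := Convex.norm_image_sub_le_of_norm_hasDerivWithin_le
    (f := f) (f' := f') (s := Ici (0:ℝ)) (C := C)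
    (fun x hx => (hf x).hasDerivWithinAt) (fun x hx => by simpa using hb x hx)
    (convex_Ici 0) hv hu
  simpa [Real.norm_eq_abs] using this

lemma hd_exp_neg (x : ℝ) : HasDerivAt (fun y : ℝ => Real.exp (-y)) (-Real.exp (-x)) x := by
  have := ((hasDerivAt_id x).neg).exp
  simpa [mul_comm] using this

lemma hd1 (x : ℝ) : HasDerivAt (fun y : ℝ => y * Real.exp (-y)) ((1-x) * Real.exp (-x)) x := by
  have := (hasDerivAt_id x).mul (hd_exp_neg x)
  exact this.congr_deriv (by simp only [id]; ring)

lemma hd1' (x : ℝ) : HasDerivAt (fun y : ℝ => (1-y) * Real.exp (-y)) ((x-2) * Real.exp (-x)) x := by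
  have := ((hasDerivAt_id x).const_sub 1).mul (hd_exp_neg x)
  exact this.congr_deriv (by simp only [id]; ring)

lemma lip1 : ∀ u v : ℝ, 0 ≤ u → 0 ≤ v →
    |(1-u) * Real.exp (-u) - (1-v) * Real.exp (-v)| ≤ 2 * |u - v| := by
  apply lip_on_Ici hd1'
  intro x hx
  rw [abs_mul, Real.abs_exp]
  rcases le_total x 2 with h | h
  · rw [abs_of_nonpos (by linarith)]
    have h1 : Real.exp (-x) ≤ 1 := Real.exp_le_one_iff.2 (by linarith)
    nlinarith [Real.exp_pos (-x)]
  · rw [abs_of_nonneg (by linarith)]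
    have h1 : x + 1 ≤ Real.exp x := Real.add_one_le_exp x
    have h2 : Real.exp (-x) * Real.exp x = 1 := by
      rw [← Real.exp_add]; simp
    nlinarith [Real.exp_pos (-x), Real.exp_pos x]

lemma lip2 : ∀ u v : ℝ, 0 ≤ u → 0 ≤ v →
    |Real.exp (-u) - Real.exp (-v)| ≤ 1 * |u - v| := by
  apply lip_on_Ici hd_exp_neg
  intro x hx
  rw [abs_neg, Real.abs_exp]
  exact Real.exp_le_one_iff.2 (by linarith)

lemma ftc_xexp {a : ℝ → ℝ} {M : ℝ} (ha : Measurable a) (h0 : ∀ t, 0 ≤ a t)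
    (hM : ∀ t, a t ≤ M) {T : ℝ} (hT : 0 ≤ T) :
    ∫ τ in (0:ℝ)..T, (1 - cum a τ) * Real.exp (-(cum a τ)) * a τ
      = cum a T * Real.exp (-(cum a T)) := by
  have hc : Continuous (fun x : ℝ => (1-x) * Real.exp (-x)) := by continuity
  have := ftc_chain ha h0 hM (φ := fun x => x * Real.exp (-x))
    (φ' := fun x => (1-x) * Real.exp (-x)) hd1 hc (L := 2) (by norm_num) lip1 hT
  simpa using this

lemma ftc_exp {a : ℝ → ℝ} {M : ℝ} (ha : Measurable a) (h0 : ∀ t, 0 ≤ a t)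
    (hM : ∀ t, a t ≤ M) {T : ℝ} (hT : 0 ≤ T) :
    ∫ τ in (0:ℝ)..T, Real.exp (-(cum a τ)) * a τ = 1 - Real.exp (-(cum a T)) := by
  have hc : Continuous (fun x : ℝ => Real.exp (-x)) := by continuity
  have hd : ∀ x : ℝ, HasDerivAt (fun y : ℝ => -Real.exp (-y)) (Real.exp (-x)) x := by
    intro x; exact (hd_exp_neg x).neg.congr_deriv (neg_neg _)
  have := ftc_chain ha h0 hM (φ := fun x => -Real.exp (-x))
    (φ' := fun x => Real.exp (-x)) hd hc (L := 1) (by norm_num) lip2 hT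
  simp at this
  linarith [this]

lemma cum_threshold {β ψ : ℝ} (hβ : 0 ≤ β) (hψ : 0 ≤ ψ) {t : ℝ} (ht : 0 ≤ t) :
    cum (threshold β ψ) t = β * min t ψ := by
  rw [cum, intervalIntegral.integral_of_le ht]
  have : ∀ s : ℝ, threshold β ψ s = (Set.Icc (0:ℝ) ψ).indicator (fun _ => β) s := by
    intro s; simp [threshold, Set.indicator_apply]
  simp_rw [this]
  rw [MeasureTheory.setIntegral_indicator measurableSet_Icc]
  have hset : Ioc (0:ℝ) t ∩ Icc 0 ψ = Ioc 0 (min t ψ) := by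
    ext x
    simp only [mem_inter_iff, mem_Ioc, mem_Icc, lt_min_iff, le_min_iff]
    constructor
    · rintro ⟨⟨h1, h2⟩, h3, h4⟩; exact ⟨h1, h2, h4⟩
    · rintro ⟨h1, h2, h3⟩; exact ⟨⟨h1, h2⟩, le_of_lt h1, h3⟩
  rw [hset]
  simp [Real.volume_Ioc, ENNReal.toReal_ofReal (le_min ht hψ : (0:ℝ) ≤ min t ψ), mul_comm]
  exact Or.inl ⟨ht, hψ⟩

lemma fubini_primitive {m g : ℝ → ℝ} {T C : ℝ} (hT : 0 ≤ T) (hC0 : 0 ≤ C)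
    (hm : Continuous m) (hg : Measurable g) (hC : ∀ t ∈ Ioc (0:ℝ) T, |g t| ≤ C) :
    ∫ τ in (0:ℝ)..T, (∫ s in (0:ℝ)..τ, m s) * g τ
      = ∫ s in (0:ℝ)..T, m s * (∫ τ in s..T, g τ) := by
  obtain ⟨Cm, hCm⟩ : ∃ Cm, ∀ x ∈ Icc (0:ℝ) T, ‖m x‖ ≤ Cm :=
    isCompact_Icc.exists_bound_of_continuousOn hm.continuousOn
  have hCm0 : 0 ≤ Cm ∨ T < 0 := by
    rcases le_or_gt 0 Cm with h | h
    · exact Or.inl h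
    · left
      have := hCm 0 ⟨le_refl 0, hT⟩
      have := norm_nonneg (m 0); linarith
  have hCm0 : 0 ≤ Cm := by
    rcases hCm0 with h | h
    · exact h
    · linarith
  set H : ℝ → ℝ → ℝ := fun s τ => if s ≤ τ then m s * g τ else 0 with hH
  haveI : IsFiniteMeasure (volume.restrict (Ioc (0:ℝ) T)) :=
    ⟨by rw [Measure.restrict_apply_univ]; exact measure_Ioc_lt_top⟩
  have hmeas : Measurable (Function.uncurry H) := by
    apply Measurable.ite (measurableSet_le measurable_fst measurable_snd)
    · exact (hm.measurable.comp measurable_fst).mul (hg.comp measurable_snd)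
    · exact measurable_const
  have hInt : Integrable (Function.uncurry H)
      ((volume.restrict (Ioc (0:ℝ) T)).prod (volume.restrict (Ioc (0:ℝ) T))) := by
    apply Integrable.mono' (g := fun _ => Cm * C) (integrable_const _)
      hmeas.aestronglyMeasurable
    rw [Measure.prod_restrict]
    rw [ae_restrict_iff' (measurableSet_Ioc.prod measurableSet_Ioc)]
    filter_upwards with p hp
    obtain ⟨hp1, hp2⟩ := hp
    simp only [Function.uncurry, hH]
    split_ifs with h
    · rw [Real.norm_eq_abs, abs_mul]
      have h1 : |m p.1| ≤ Cm := by
        have := hCm p.1 ⟨le_of_lt hp1.1, hp1.2⟩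
        simpa [Real.norm_eq_abs] using this
      have h2 : |g p.2| ≤ C := hC p.2 hp2
      have := abs_nonneg (m p.1); have := abs_nonneg (g p.2)
      nlinarith
    · simp; positivity
  have hswap := MeasureTheory.integral_integral_swap (f := H)
    (μ := volume.restrict (Ioc (0:ℝ) T)) (ν := volume.restrict (Ioc (0:ℝ) T)) hInt
  have hLHS : ∫ τ in (0:ℝ)..T, (∫ s in (0:ℝ)..τ, m s) * g τ
      = ∫ τ in Ioc (0:ℝ) T, ∫ s in Ioc (0:ℝ) T, H s τ := by
    rw [intervalIntegral.integral_of_le hT]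
    apply setIntegral_congr_fun measurableSet_Ioc
    intro τ hτ
    show (∫ s in (0:ℝ)..τ, m s) * g τ = ∫ s in Ioc (0:ℝ) T, H s τ
    have : ∫ s in Ioc (0:ℝ) T, H s τ
        = ∫ s in Ioc (0:ℝ) T, (Iic τ).indicator (fun s => m s * g τ) s := by
      apply setIntegral_congr_fun measurableSet_Ioc
      intro s _
      simp [hH, Set.indicator_apply, mem_Iic]
    rw [this, MeasureTheory.setIntegral_indicator measurableSet_Iic]
    have hset : Ioc (0:ℝ) T ∩ Iic τ = Ioc 0 τ := by
      ext x
      simp only [mem_inter_iff, mem_Ioc, mem_Iic]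
      constructor
      · rintro ⟨⟨h1, _⟩, h3⟩; exact ⟨h1, h3⟩
      · rintro ⟨h1, h2⟩; exact ⟨⟨h1, le_trans h2 hτ.2⟩, h2⟩
    rw [hset, MeasureTheory.integral_mul_const, intervalIntegral.integral_of_le (le_of_lt hτ.1)]
  have hRHS : ∫ s in (0:ℝ)..T, m s * (∫ τ in s..T, g τ)
      = ∫ s in Ioc (0:ℝ) T, ∫ τ in Ioc (0:ℝ) T, H s τ := by
    rw [intervalIntegral.integral_of_le hT]
    apply setIntegral_congr_fun measurableSet_Ioc
    intro s hs
    show m s * (∫ τ in s..T, g τ) = ∫ τ in Ioc (0:ℝ) T, H s τ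
    have : ∫ τ in Ioc (0:ℝ) T, H s τ
        = ∫ τ in Ioc (0:ℝ) T, (Ici s).indicator (fun τ => m s * g τ) τ := by
      apply setIntegral_congr_fun measurableSet_Ioc
      intro τ _
      simp [hH, Set.indicator_apply, mem_Ici]
    rw [this, MeasureTheory.setIntegral_indicator measurableSet_Ici]
    have hset : Ioc (0:ℝ) T ∩ Ici s = Icc s T := by
      ext x
      simp only [mem_inter_iff, mem_Ioc, mem_Icc, mem_Ici]
      constructor
      · rintro ⟨⟨_, h2⟩, h3⟩; exact ⟨h3, h2⟩
      · rintro ⟨h1, h2⟩; exact ⟨⟨lt_of_lt_of_le hs.1 h1, h2⟩, h1⟩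
    rw [hset, MeasureTheory.integral_Icc_eq_integral_Ioc, MeasureTheory.integral_const_mul,
      intervalIntegral.integral_of_le hs.2]
  rw [hLHS, hRHS]
  exact hswap.symm

lemma threshold_meas (β ψ : ℝ) : Measurable (threshold β ψ) :=
  Measurable.ite measurableSet_Icc measurable_const measurable_const

lemma threshold_nonneg {β : ℝ} (hβ : 0 ≤ β) (ψ t : ℝ) : 0 ≤ threshold β ψ t := by
  unfold threshold; split_ifs <;> simp [hβ]

lemma threshold_le {β : ℝ} (hβ : 0 ≤ β) (ψ t : ℝ) : threshold β ψ t ≤ β := by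
  unfold threshold; split_ifs <;> simp [hβ]

lemma coef_bound {T ν βi βj ψ τ : ℝ} (hν1 : ν < 1/2)
    (hβi : 0 < βi) (hβij : βi ≤ βj) (hψ0 : 0 ≤ ψ)
    (hcase1 : (1 - 2*ν)/(1-ν) ≤ Real.exp (-(βi*T)))
    (hτ0 : 0 ≤ τ) (hτT : τ ≤ T) :
    (1-ν) * (1 - Real.exp (-(βi*(T-τ)))) * Real.exp (-(βj * min τ ψ)) ≤ ν := by
  have hν3 : (0:ℝ) < 1 - ν := by linarith
  set m := min τ ψ with hm
  have hm0 : 0 ≤ m := le_min hτ0 hψ0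
  have hmτ : m ≤ τ := min_le_left _ _
  have e1 : Real.exp (-(βi*(T-τ))) ≥ Real.exp (-(βi*(T-m))) :=
    Real.exp_le_exp.2 (by nlinarith)
  have e2 : Real.exp (-(βj*m)) ≤ Real.exp (-(βi*m)) :=
    Real.exp_le_exp.2 (by nlinarith)
  have h1 : 0 ≤ 1 - Real.exp (-(βi*(T-τ))) := by
    have : Real.exp (-(βi*(T-τ))) ≤ 1 := Real.exp_le_one_iff.2 (by nlinarith)
    linarith
  have h2 : 0 ≤ 1 - Real.exp (-(βi*(T-m))) := by linarith
  have step1 : (1-ν)*(1 - Real.exp (-(βi*(T-τ))))*Real.exp (-(βj*m))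
      ≤ (1-ν)*((1 - Real.exp (-(βi*(T-m))))*Real.exp (-(βi*m))) := by
    have hx : 1 - Real.exp (-(βi*(T-τ))) ≤ 1 - Real.exp (-(βi*(T-m))) := by linarith
    have hprod : (1 - Real.exp (-(βi*(T-τ)))) * Real.exp (-(βj*m))
        ≤ (1 - Real.exp (-(βi*(T-m)))) * Real.exp (-(βi*m)) :=
      mul_le_mul hx e2 (Real.exp_pos _).le h2
    rw [mul_assoc]
    exact mul_le_mul_of_nonneg_left hprod (by linarith)
  have hideq : (1 - Real.exp (-(βi*(T-m))))*Real.exp (-(βi*m))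
      = Real.exp (-(βi*m)) - Real.exp (-(βi*T)) := by
    rw [sub_mul, one_mul, ← Real.exp_add]; ring_nf
  have hem1 : Real.exp (-(βi*m)) ≤ 1 :=
    Real.exp_le_one_iff.2 (by nlinarith [mul_nonneg hβi.le hm0])
  have step2 : Real.exp (-(βi*m)) - Real.exp (-(βi*T)) ≤ 1 - (1-2*ν)/(1-ν) := by
    linarith
  have hfinal : (1-ν) * (1 - (1-2*ν)/(1-ν)) = ν := by field_simp; ring
  calc (1-ν) * (1 - Real.exp (-(βi*(T-τ)))) * Real.exp (-(βj*m))
      ≤ (1-ν)*((1 - Real.exp (-(βi*(T-m))))*Real.exp (-(βi*m))) := step1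
  _ = (1-ν)*(Real.exp (-(βi*m)) - Real.exp (-(βi*T))) := by rw [hideq]
  _ ≤ (1-ν) * (1 - (1-2*ν)/(1-ν)) := by nlinarith
  _ = ν := hfinal

lemma part1 {T ν βi βj ψ : ℝ} (hT : 0 < T) (hν0 : 0 < ν) (hν1 : ν < 1/2)
    (hβi : 0 < βi) (hβij : βi ≤ βj) (hψ0 : 0 ≤ ψ)
    (hcase1 : (1 - 2*ν)/(1-ν) ≤ Real.exp (-(βi*T)))
    {a : ℝ → ℝ} (ha : Measurable a) (h0 : ∀ t, 0 ≤ a t) (hM : ∀ t, a t ≤ βi) :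
    twoLockPayoff T ν βi a (threshold βj ψ) ≤ 0 := by
  have hβj : 0 < βj := lt_of_lt_of_le hβi hβij
  set bst := threshold βj ψ with hbst
  have hAc : Continuous (cum a) := cum_cont ha h0 hM
  have hBc : Continuous (cum bst) :=
    cum_cont (threshold_meas βj ψ) (threshold_nonneg hβj.le ψ) (threshold_le hβj.le ψ)
  have haint := ctrl_int ha h0 hM
  have hCc : Continuous (fun τ => ((1 - ν) * (1 - Real.exp (-(βi * (T - τ))))
      * Real.exp (-(cum bst τ)) - ν * cum a τ) * Real.exp (-(cum a τ))) := by
    fun_prop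
  have hf₁int : IntervalIntegrable (fun τ => ((1 - ν) * (1 - Real.exp (-(βi * (T - τ))))
      * Real.exp (-(cum bst τ)) - ν * cum a τ) * Real.exp (-(cum a τ)) * a τ) volume 0 T := by
    exact (haint 0 T).continuousOn_mul hCc.continuousOn
  have hDc : Continuous (fun τ => ν * ((1 - cum a τ) * Real.exp (-(cum a τ)))) := by fun_prop
  have hg₁int : IntervalIntegrable
      (fun τ => ν * ((1 - cum a τ) * Real.exp (-(cum a τ)) * a τ)) volume 0 T := by
    have := (haint 0 T).continuousOn_mul hDc.continuousOn
    simpa [mul_assoc] using this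
  have hpt : ∀ τ ∈ Icc (0:ℝ) T,
      ((1 - ν) * (1 - Real.exp (-(βi * (T - τ)))) * Real.exp (-(cum bst τ))
          - ν * cum a τ) * Real.exp (-(cum a τ)) * a τ
      ≤ ν * ((1 - cum a τ) * Real.exp (-(cum a τ)) * a τ) := by
    intro τ hτ
    have hcb : cum bst τ = βj * min τ ψ := cum_threshold hβj.le hψ0 hτ.1
    have hX : (1-ν) * (1 - Real.exp (-(βi*(T-τ)))) * Real.exp (-(cum bst τ)) ≤ ν := by
      rw [hcb]; exact coef_bound hν1 hβi hβij hψ0 hcase1 hτ.1 hτ.2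
    nlinarith [mul_nonneg (Real.exp_nonneg (-(cum a τ))) (h0 τ),
      mul_nonneg (mul_nonneg (sub_nonneg.2 hX) (Real.exp_nonneg (-(cum a τ)))) (h0 τ)]
  have hmono := intervalIntegral.integral_mono_on hT.le hf₁int hg₁int hpt
  have hftc : (∫ τ in (0:ℝ)..T, ν * ((1 - cum a τ) * Real.exp (-(cum a τ)) * a τ))
      = ν * (cum a T * Real.exp (-(cum a T))) := by
    rw [intervalIntegral.integral_const_mul, ftc_xexp ha h0 hM hT.le]
  unfold twoLockPayoff
  linarith [hmono, hftc]

noncomputable def mfun (ν βj T : ℝ) : ℝ → ℝ :=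
  fun s => (1-ν) * βj * Real.exp (-(βj*(T-s)))
noncomputable def M0 (ν βj T : ℝ) : ℝ → ℝ :=
  fun t => (1-ν) * (Real.exp (-(βj*(T-t))) - Real.exp (-(βj*T)))

lemma mfun_cont (ν βj T : ℝ) : Continuous (mfun ν βj T) := by unfold mfun; fun_prop

lemma mfun_nonneg {ν βj : ℝ} (T : ℝ) (hν : ν ≤ 1) (hβj : 0 ≤ βj) (s : ℝ) :
    0 ≤ mfun ν βj T s :=
  mul_nonneg (mul_nonneg (by linarith) hβj) (Real.exp_nonneg _)

lemma M0_deriv (ν βj T x : ℝ) : HasDerivAt (M0 ν βj T) (mfun ν βj T x) x := by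
  have h1 : HasDerivAt (fun t : ℝ => -(βj*(T-t))) βj x := by
    have := (((hasDerivAt_id x).const_sub T).const_mul βj).neg
    exact this.congr_deriv (by ring)
  have h2 := h1.exp
  have := (h2.sub_const (Real.exp (-(βj*T)))).const_mul (1-ν)
  exact this.congr_deriv (by unfold mfun; ring)

lemma M0_integral (ν βj T u v : ℝ) :
    (∫ s in u..v, mfun ν βj T s) = M0 ν βj T v - M0 ν βj T u :=
  intervalIntegral.integral_eq_sub_of_hasDerivAt (fun x _ => M0_deriv ν βj T x)
    ((mfun_cont ν βj T).intervalIntegrable u v)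

lemma M0_zero (ν βj T : ℝ) : M0 ν βj T 0 = 0 := by simp [M0]

lemma payoff_rep {T ν βj ψ : ℝ} (hT : 0 < T) (hν1 : ν < 1) (hβj : 0 < βj)
    (hk : (1-ν) * Real.exp (-(βj*(T-ψ))) = 1-2*ν)
    {b : ℝ → ℝ} (hb : Measurable b) (h0 : ∀ t, 0 ≤ b t) (hM : ∀ t, b t ≤ βj) :
    twoLockPayoff T ν βj b (fun _ => 0)
      = M0 ν βj T ψ + (M0 ν βj T T - M0 ν βj T ψ) * Real.exp (-(cum b T))
        - ∫ s in (0:ℝ)..T, mfun ν βj T s * Real.exp (-(cum b s)) := by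
  have hBc : Continuous (cum b) := cum_cont hb h0 hM
  have hbint := ctrl_int hb h0 hM
  have hEc : Continuous (fun τ => Real.exp (-(cum b τ))) := by fun_prop
  have hgint : ∀ u v : ℝ, IntervalIntegrable (fun τ => Real.exp (-(cum b τ)) * b τ)
      volume u v := fun u v => (hbint u v).continuousOn_mul hEc.continuousOn
  have hg_meas : Measurable (fun τ => Real.exp (-(cum b τ)) * b τ) :=
    hEc.measurable.mul hb
  have hQ : ∀ s ∈ Icc (0:ℝ) T, (∫ τ in s..T, Real.exp (-(cum b τ)) * b τ)
      = Real.exp (-(cum b s)) - Real.exp (-(cum b T)) := by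
    intro s hs
    have hadd := intervalIntegral.integral_add_adjacent_intervals (hgint 0 s) (hgint s T)
    have h1 := ftc_exp hb h0 hM hs.1
    have h2 := ftc_exp hb h0 hM hT.le
    rw [h1] at hadd
    linarith [hadd, h2]
  have hM0c : Continuous (M0 ν βj T) := by unfold M0; fun_prop
  have hstep0 : twoLockPayoff T ν βj b (fun _ => 0)
      = (∫ τ in (0:ℝ)..T, ((1-ν)*(1-Real.exp (-(βj*(T-τ)))) - ν * cum b τ)
          * Real.exp (-(cum b τ)) * b τ) - ν * cum b T * Real.exp (-(cum b T)) := by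
    unfold twoLockPayoff
    congr 1
    have hz : cum (fun _ : ℝ => (0:ℝ)) = fun _ => 0 := funext fun τ => by simp [cum]
    rw [hz]
    simp only [neg_zero, Real.exp_zero, mul_one]
  have hi1 : IntervalIntegrable (fun τ => ((1-ν)*(1-Real.exp (-(βj*(T-τ)))) - ν)
      * (Real.exp (-(cum b τ)) * b τ)) volume 0 T :=
    (hgint 0 T).continuousOn_mul (by fun_prop : Continuous fun τ =>
      (1-ν)*(1-Real.exp (-(βj*(T-τ)))) - ν).continuousOn
  have hi2 : IntervalIntegrable (fun τ => ν * ((1 - cum b τ) * Real.exp (-(cum b τ)) * b τ))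
      volume 0 T := by
    have : Continuous (fun τ => ν * ((1 - cum b τ) * Real.exp (-(cum b τ)))) := by fun_prop
    have := (hbint 0 T).continuousOn_mul this.continuousOn
    simpa [mul_assoc] using this
  have hsplit : (∫ τ in (0:ℝ)..T, ((1-ν)*(1-Real.exp (-(βj*(T-τ)))) - ν * cum b τ)
        * Real.exp (-(cum b τ)) * b τ)
      = (∫ τ in (0:ℝ)..T, ((1-ν)*(1-Real.exp (-(βj*(T-τ)))) - ν)
          * (Real.exp (-(cum b τ)) * b τ))
        + ν * (cum b T * Real.exp (-(cum b T))) := by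
    rw [← ftc_xexp hb h0 hM hT.le, ← intervalIntegral.integral_const_mul,
      ← intervalIntegral.integral_add hi1 hi2]
    apply intervalIntegral.integral_congr
    intro τ _
    beta_reduce
    ring
  have hkid : ∀ τ : ℝ, (1-ν)*(1-Real.exp (-(βj*(T-τ)))) - ν
      = M0 ν βj T ψ - M0 ν βj T τ := by
    intro τ; unfold M0; linear_combination -hk
  have hiM0 : IntervalIntegrable (fun τ => M0 ν βj T τ * (Real.exp (-(cum b τ)) * b τ))
      volume 0 T := (hgint 0 T).continuousOn_mul hM0c.continuousOn
  have key : (∫ τ in (0:ℝ)..T, ((1-ν)*(1-Real.exp (-(βj*(T-τ)))) - ν)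
        * (Real.exp (-(cum b τ)) * b τ))
      = M0 ν βj T ψ * (1 - Real.exp (-(cum b T)))
        - ∫ s in (0:ℝ)..T, mfun ν βj T s
            * (Real.exp (-(cum b s)) - Real.exp (-(cum b T))) := by
    have e1 : (∫ τ in (0:ℝ)..T, ((1-ν)*(1-Real.exp (-(βj*(T-τ)))) - ν)
          * (Real.exp (-(cum b τ)) * b τ))
        = (∫ τ in (0:ℝ)..T, M0 ν βj T ψ * (Real.exp (-(cum b τ)) * b τ))
          - ∫ τ in (0:ℝ)..T, M0 ν βj T τ * (Real.exp (-(cum b τ)) * b τ) := by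
      rw [← intervalIntegral.integral_sub ((hgint 0 T).const_mul _) hiM0]
      apply intervalIntegral.integral_congr
      intro τ _
      beta_reduce
      rw [hkid τ]; ring
    have e2 : (∫ τ in (0:ℝ)..T, M0 ν βj T ψ * (Real.exp (-(cum b τ)) * b τ))
        = M0 ν βj T ψ * (1 - Real.exp (-(cum b T))) := by
      rw [intervalIntegral.integral_const_mul, ftc_exp hb h0 hM hT.le]
    have e3 : (∫ τ in (0:ℝ)..T, M0 ν βj T τ * (Real.exp (-(cum b τ)) * b τ))
        = ∫ τ in (0:ℝ)..T, (∫ s in (0:ℝ)..τ, mfun ν βj T s)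
            * (Real.exp (-(cum b τ)) * b τ) := by
      apply intervalIntegral.integral_congr
      intro τ _
      beta_reduce
      rw [M0_integral, M0_zero]; ring
    have e4 : (∫ τ in (0:ℝ)..T, (∫ s in (0:ℝ)..τ, mfun ν βj T s)
          * (Real.exp (-(cum b τ)) * b τ))
        = ∫ s in (0:ℝ)..T, mfun ν βj T s
            * (∫ τ in s..T, Real.exp (-(cum b τ)) * b τ) := by
      apply fubini_primitive hT.le hβj.le (mfun_cont ν βj T) hg_meas
      intro t ht
      have hc0 : 0 ≤ cum b t := cum_nonneg hb h0 hM ht.1.le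
      have hE1 : Real.exp (-(cum b t)) ≤ 1 := Real.exp_le_one_iff.2 (by linarith)
      rw [abs_of_nonneg (mul_nonneg (Real.exp_nonneg _) (h0 t))]
      calc Real.exp (-(cum b t)) * b t ≤ 1 * b t :=
        mul_le_mul_of_nonneg_right hE1 (h0 t)
      _ = b t := one_mul _
      _ ≤ βj := hM t
    have e5 : (∫ s in (0:ℝ)..T, mfun ν βj T s
          * (∫ τ in s..T, Real.exp (-(cum b τ)) * b τ))
        = ∫ s in (0:ℝ)..T, mfun ν βj T s
            * (Real.exp (-(cum b s)) - Real.exp (-(cum b T))) := by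
      apply intervalIntegral.integral_congr
      intro s hs
      rw [Set.uIcc_of_le hT.le] at hs
      beta_reduce
      rw [hQ s hs]
    rw [e1, e2, e3, e4, e5]
  have e6 : (∫ s in (0:ℝ)..T, mfun ν βj T s
        * (Real.exp (-(cum b s)) - Real.exp (-(cum b T))))
      = (∫ s in (0:ℝ)..T, mfun ν βj T s * Real.exp (-(cum b s)))
        - (M0 ν βj T T - M0 ν βj T 0) * Real.exp (-(cum b T)) := by
    rw [← M0_integral, ← intervalIntegral.integral_mul_const]
    have hiA : IntervalIntegrable (fun s => mfun ν βj T s * Real.exp (-(cum b s)))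
        volume 0 T := ((mfun_cont ν βj T).mul hEc).intervalIntegrable 0 T
    have hiB : IntervalIntegrable (fun s => mfun ν βj T s * Real.exp (-(cum b T)))
        volume 0 T := ((mfun_cont ν βj T).mul continuous_const).intervalIntegrable 0 T
    rw [← intervalIntegral.integral_sub hiA hiB]
    apply intervalIntegral.integral_congr
    intro s _
    beta_reduce
    ring
  rw [hstep0, hsplit, key, e6, M0_zero]
  ring

lemma part2 {T ν βj ψ : ℝ} (hT : 0 < T) (hν1 : ν < 1) (hβj : 0 < βj)
    (hψ0 : 0 ≤ ψ) (hψT : ψ ≤ T)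
    (hk : (1-ν) * Real.exp (-(βj*(T-ψ))) = 1-2*ν)
    {b : ℝ → ℝ} (hb : Measurable b) (h0 : ∀ t, 0 ≤ b t) (hM : ∀ t, b t ≤ βj) :
    twoLockPayoff T ν βj b (fun _ => 0)
      ≤ twoLockPayoff T ν βj (threshold βj ψ) (fun _ => 0) := by
  rw [payoff_rep hT hν1 hβj hk hb h0 hM,
    payoff_rep hT hν1 hβj hk (threshold_meas βj ψ) (threshold_nonneg hβj.le ψ)
      (threshold_le hβj.le ψ)]
  set bst := threshold βj ψ with hbstdef
  have hbint := ctrl_int hb h0 hM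
  have hBc : Continuous (cum b) := cum_cont hb h0 hM
  have hBstc : Continuous (cum bst) :=
    cum_cont (threshold_meas βj ψ) (threshold_nonneg hβj.le ψ) (threshold_le hβj.le ψ)
  have hbstT : cum bst T = βj * ψ := by
    rw [hbstdef, cum_threshold hβj.le hψ0 hT.le, min_eq_right hψT]
  have hiA : ∀ u v : ℝ, IntervalIntegrable
      (fun s => mfun ν βj T s * Real.exp (-(cum b s))) volume u v := by
    intro u v
    exact ((mfun_cont ν βj T).mul (by fun_prop : Continuous fun s =>
      Real.exp (-(cum b s)))).intervalIntegrable u v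
  have hiB : ∀ u v : ℝ, IntervalIntegrable
      (fun s => mfun ν βj T s * Real.exp (-(cum bst s))) volume u v := by
    intro u v
    exact ((mfun_cont ν βj T).mul (by fun_prop : Continuous fun s =>
      Real.exp (-(cum bst s)))).intervalIntegrable u v
  have hsA := intervalIntegral.integral_add_adjacent_intervals (hiA 0 ψ) (hiA ψ T)
  have hsB := intervalIntegral.integral_add_adjacent_intervals (hiB 0 ψ) (hiB ψ T)
  have I1 : (∫ s in (0:ℝ)..ψ, mfun ν βj T s * Real.exp (-(cum bst s)))
      ≤ ∫ s in (0:ℝ)..ψ, mfun ν βj T s * Real.exp (-(cum b s)) := by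
    apply intervalIntegral.integral_mono_on hψ0 (hiB 0 ψ) (hiA 0 ψ)
    intro s hs
    have h1 : cum b s ≤ βj * s := by
      have hc : cum b s = ∫ τ in (0:ℝ)..s, b τ := rfl
      rw [hc]
      have hle : (∫ τ in (0:ℝ)..s, b τ) ≤ ∫ τ in (0:ℝ)..s, βj :=
        intervalIntegral.integral_mono_on hs.1 (hbint 0 s) intervalIntegrable_const
          (fun x _ => hM x)
      have hcst : (∫ τ in (0:ℝ)..s, (βj:ℝ)) = βj * s := by
        rw [intervalIntegral.integral_const, smul_eq_mul]; ring
      linarith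
    have h2 : cum bst s = βj * s := by
      rw [hbstdef, cum_threshold hβj.le hψ0 hs.1, min_eq_left hs.2]
    apply mul_le_mul_of_nonneg_left _ (mfun_nonneg T hν1.le hβj.le s)
    exact Real.exp_le_exp.2 (by rw [h2]; linarith)
  have I2 : (∫ s in ψ..T, mfun ν βj T s * Real.exp (-(cum bst s)))
      = (M0 ν βj T T - M0 ν βj T ψ) * Real.exp (-(βj * ψ)) := by
    have heq : Set.EqOn (fun s => mfun ν βj T s * Real.exp (-(cum bst s)))
        (fun s => mfun ν βj T s * Real.exp (-(βj * ψ))) (Set.uIcc ψ T) := by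
      intro s hs
      rw [Set.uIcc_of_le hψT] at hs
      beta_reduce
      rw [hbstdef, cum_threshold hβj.le hψ0 (le_trans hψ0 hs.1), min_eq_right hs.1]
    rw [intervalIntegral.integral_congr heq, intervalIntegral.integral_mul_const,
      M0_integral]
  have I3 : (M0 ν βj T T - M0 ν βj T ψ) * Real.exp (-(cum b T))
      ≤ ∫ s in ψ..T, mfun ν βj T s * Real.exp (-(cum b s)) := by
    have hlow : (∫ s in ψ..T, mfun ν βj T s * Real.exp (-(cum b T)))
        = (M0 ν βj T T - M0 ν βj T ψ) * Real.exp (-(cum b T)) := by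
      rw [intervalIntegral.integral_mul_const, M0_integral]
    rw [← hlow]
    apply intervalIntegral.integral_mono_on hψT
      (((mfun_cont ν βj T).mul continuous_const).intervalIntegrable ψ T) (hiA ψ T)
    intro s hs
    apply mul_le_mul_of_nonneg_left _ (mfun_nonneg T hν1.le hβj.le s)
    exact Real.exp_le_exp.2 (by linarith [cum_mono hb h0 hM hs.2])
  rw [hbstT]
  linarith [I1, I2, I3, hsA, hsB]

/-- Paper's Theorem 4, second case. -/
theorem two_lock_NE_i_silent_j_threshold
    (T ν βi βj : ℝ) (hT : 0 < T) (hν0 : 0 < ν) (hν1 : ν < 1/2)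
    (hβi : 0 < βi) (hβij : βi ≤ βj)
    (hcase1 : Real.exp (-(βi * T)) > (1 - 2*ν) / (1 - ν))
    (hcase2 : (1 - 2*ν) / (1 - ν) > Real.exp (-(βj * T))) :
    0 < T + Real.log ((1 - 2*ν) / (1 - ν)) / βj ∧
    T + Real.log ((1 - 2*ν) / (1 - ν)) / βj < T ∧
    (∀ a : ℝ → ℝ, Measurable a → (∀ t ∈ Icc (0:ℝ) T, a t ∈ Icc (0:ℝ) βi) →
        twoLockPayoff T ν βi a
            (threshold βj (T + Real.log ((1 - 2*ν) / (1 - ν)) / βj))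
          ≤ twoLockPayoff T ν βi (fun _ => 0)
              (threshold βj (T + Real.log ((1 - 2*ν) / (1 - ν)) / βj))) ∧
    (∀ b : ℝ → ℝ, Measurable b → (∀ t ∈ Icc (0:ℝ) T, b t ∈ Icc (0:ℝ) βj) →
        twoLockPayoff T ν βj b (fun _ => 0)
          ≤ twoLockPayoff T ν βj
              (threshold βj (T + Real.log ((1 - 2*ν) / (1 - ν)) / βj))
              (fun _ => 0)) := by
  have hν2 : (0:ℝ) < 1 - 2*ν := by linarith
  have hν3 : (0:ℝ) < 1 - ν := by linarith
  have hβj : (0:ℝ) < βj := lt_of_lt_of_le hβi hβij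
  set c : ℝ := (1 - 2*ν) / (1 - ν) with hcdef
  set ψ : ℝ := T + Real.log c / βj with hψdef
  have hc0 : 0 < c := div_pos hν2 hν3
  have hc1 : c < 1 := (div_lt_one hν3).2 (by linarith)
  have hψT : ψ < T := by
    have hlog : Real.log c < 0 := Real.log_neg hc0 hc1
    have : Real.log c / βj < 0 := div_neg_of_neg_of_pos hlog hβj
    rw [hψdef]; linarith
  have hψ0 : 0 < ψ := by
    have h1 : -(βj*T) < Real.log c := (Real.lt_log_iff_exp_lt hc0).2 hcase2
    have h2 : -(βj*T)/βj < Real.log c / βj := by gcongr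
    have h3 : -(βj*T)/βj = -T := by rw [mul_comm]; field_simp
    rw [hψdef]; linarith
  have hk : (1-ν) * Real.exp (-(βj*(T-ψ))) = 1-2*ν := by
    have h1 : T - ψ = -(Real.log c / βj) := by rw [hψdef]; ring
    have h2 : -(βj*(T-ψ)) = Real.log c := by rw [h1]; field_simp
    rw [h2, Real.exp_log hc0, hcdef]
    field_simp
  -- truncation
  have htrunc : ∀ (βo : ℝ) (bo f : ℝ → ℝ), (∀ t ∈ Icc (0:ℝ) T, f t ∈ Icc (0:ℝ) βo) →
      twoLockPayoff T ν βo f bo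
        = twoLockPayoff T ν βo (fun t => if t ∈ Icc (0:ℝ) T then f t else 0) bo := by
    intro βo bo f hfadm
    set f' := fun t => if t ∈ Icc (0:ℝ) T then f t else 0 with hf'
    have hcum : ∀ τ ∈ Icc (0:ℝ) T, cum f τ = cum f' τ := by
      intro τ hτ
      unfold cum
      rw [intervalIntegral.integral_of_le hτ.1, intervalIntegral.integral_of_le hτ.1]
      apply setIntegral_congr_fun measurableSet_Ioc
      intro s hs
      have hmem : s ∈ Icc (0:ℝ) T := ⟨hs.1.le, le_trans hs.2 hτ.2⟩
      simp [hf', hmem.1, hmem.2]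
    unfold twoLockPayoff
    rw [hcum T ⟨hT.le, le_refl T⟩]
    congr 1
    apply intervalIntegral.integral_congr
    intro τ hτ
    rw [Set.uIcc_of_le hT.le] at hτ
    beta_reduce
    rw [hcum τ hτ]
    have : f' τ = f τ := by simp [hf', hτ.1, hτ.2]
    rw [this]
  refine ⟨hψ0, hψT, ?_, ?_⟩
  · -- part 1
    intro a ha hadm
    have hRHS : twoLockPayoff T ν βi (fun _ => 0) (threshold βj ψ) = 0 := by
      unfold twoLockPayoff
      simp [cum]
    rw [hRHS, htrunc βi (threshold βj ψ) a hadm]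
    set a' := fun t => if t ∈ Icc (0:ℝ) T then a t else 0 with ha'def
    have ha' : Measurable a' := Measurable.ite measurableSet_Icc ha measurable_const
    have h0' : ∀ t, 0 ≤ a' t := by
      intro t
      simp only [ha'def]
      split_ifs with h
      · exact (hadm t h).1
      · exact le_refl 0
    have hM' : ∀ t, a' t ≤ βi := by
      intro t
      simp only [ha'def]
      split_ifs with h
      · exact (hadm t h).2
      · exact hβi.le
    exact part1 hT hν0 hν1 hβi hβij hψ0.le hcase1.le ha' h0' hM'
  · -- part 2
    intro b hb hbadm
    rw [htrunc βj (fun _ => 0) b hbadm]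
    set b' := fun t => if t ∈ Icc (0:ℝ) T then b t else 0 with hb'def
    have hb' : Measurable b' := Measurable.ite measurableSet_Icc hb measurable_const
    have h0' : ∀ t, 0 ≤ b' t := by
      intro t
      simp only [hb'def]
      split_ifs with h
      · exact (hbadm t h).1
      · exact le_refl 0
    have hM' : ∀ t, b' t ≤ βj := by
      intro t
      simp only [hb'def]
      split_ifs with h
      · exact (hbadm t h).2
      · exact hβj.le
    exact part2 hT (by linarith : ν < 1) hβj hψ0.le hψT.le hk hb' h0' hM'
end
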